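/- Let M be a compact smooth manifold without boundary and e : M → ℝ^k a smooth embedding. Then there exists L > 0 such that for every ε with 0 < ε < L there exists an ε-tubular neighborhood (ν, r) of e. -/

import Mathlib

open Metric Set Manifold

/-- `e : M → ℝ^k` is a smooth embedding: a smooth map which is a topological embedding
and whose differential is injective at every point. -/
def IsSmoothEmbedding {n k : ℕ} {M : Type*} [TopologicalSpace M]
    [ChartedSpace (EuclideanSpace ℝ (Fin n)) M] [IsManifold (𝓡 n) (⊤ : ℕ∞) M]
    (e : M → EuclideanSpace ℝ (Fin k)) : Prop :=
  ContMDiff (𝓡 n) (𝓡 k) (⊤ : ℕ∞) e ∧ Topology.IsEmbedding e ∧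
    ∀ y : M, Function.Injective (mfderiv (𝓡 n) (𝓡 k) e y)

/-- `(ν, r)` is an `ε`-tubular neighborhood of the embedding `e : M → ℝ^k`:
`ν` is an open set containing `e(M)` and `r : ν → e(M)` is a continuous retraction such that
(1) `‖x - r x‖ ≤ ‖x - e y‖` for all `x ∈ ν`, `y ∈ M`, with equality iff `r x = e y`; and
(2) the fiber `r⁻¹(e y)` is the open `ε`-ball around `e y` in the affine subspace
`e y + (range (mfderiv e y))ᗮ`. -/
def IsTubularNbhd {n k : ℕ} {M : Type*} [TopologicalSpace M]
    [ChartedSpace (EuclideanSpace ℝ (Fin n)) M] [IsManifold (𝓡 n) (⊤ : ℕ∞) M]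
    (e : M → EuclideanSpace ℝ (Fin k)) (ε : ℝ) (ν : Set (EuclideanSpace ℝ (Fin k)))
    (r : EuclideanSpace ℝ (Fin k) → EuclideanSpace ℝ (Fin k)) : Prop :=
  IsOpen ν ∧ Set.range e ⊆ ν ∧ ContinuousOn r ν ∧ (∀ x ∈ ν, r x ∈ Set.range e) ∧
  (∀ y : M, r (e y) = e y) ∧
  (∀ x ∈ ν, ∀ y : M, ‖x - r x‖ ≤ ‖x - e y‖ ∧ (‖x - r x‖ = ‖x - e y‖ ↔ r x = e y)) ∧
  (∀ y : M, ∀ x : EuclideanSpace ℝ (Fin k), (x ∈ ν ∧ r x = e y) ↔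
    ∃ v : EuclideanSpace ℝ (Fin k),
      (∀ w : TangentSpace (𝓡 n) y,
        inner (𝕜 := ℝ) v (mfderiv (𝓡 n) (𝓡 k) e y w : EuclideanSpace ℝ (Fin k)) = 0) ∧
      ‖v‖ < ε ∧ x = e y + v)

section TubularAux

open scoped RealInnerProductSpace
set_option maxHeartbeats 1000000

variable {n k : ℕ} {M : Type*} [TopologicalSpace M]
    [ChartedSpace (EuclideanSpace ℝ (Fin n)) M] [IsManifold (𝓡 n) (⊤ : ℕ∞) M]

local notation "𝔼" k => EuclideanSpace ℝ (Fin k)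

theorem contDiffOn_rep (e : M → 𝔼 k) (he : ContMDiff (𝓡 n) (𝓡 k) (⊤ : ℕ∞) e) (y₀ : M) :
    ContDiffOn ℝ 2 (e ∘ (chartAt (EuclideanSpace ℝ (Fin n)) y₀).symm)
      (chartAt (EuclideanSpace ℝ (Fin n)) y₀).target := by
  have h1 : ContMDiffOn (𝓡 n) (𝓡 n) 2 (chartAt (EuclideanSpace ℝ (Fin n)) y₀).symm
      (chartAt (EuclideanSpace ℝ (Fin n)) y₀).target := by
    exact (contMDiffOn_chart_symm (I := 𝓡 n) (n := ((⊤ : ℕ∞) : WithTop ℕ∞)) (x := y₀)).of_le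
      (WithTop.coe_le_coe.mpr le_top)
  exact ContMDiffOn.contDiffOn
    (((he.of_le (WithTop.coe_le_coe.mpr le_top)).contMDiffOn (s := univ)).comp h1 (mapsTo_univ _ _))

theorem fderiv_rep (e : M → 𝔼 k) (he : ContMDiff (𝓡 n) (𝓡 k) (⊤ : ℕ∞) e)
    (y₀ : M) {z : 𝔼 n} (hz : z ∈ (chartAt (EuclideanSpace ℝ (Fin n)) y₀).target) :
    fderiv ℝ (e ∘ (chartAt (EuclideanSpace ℝ (Fin n)) y₀).symm) z =
      (mfderiv (𝓡 n) (𝓡 k) e ((chartAt (EuclideanSpace ℝ (Fin n)) y₀).symm z)).comp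
        (mfderiv (𝓡 n) (𝓡 n) (chartAt (EuclideanSpace ℝ (Fin n)) y₀).symm z) := by
  rw [← mfderiv_eq_fderiv]
  exact mfderiv_comp z ((he _).mdifferentiableAt (by simp))
    ((mdifferentiable_chart y₀).mdifferentiableAt_symm hz)

/-- The local quadratic estimate around a point `y₀`. -/
theorem local_quad (e : M → 𝔼 k) (hsm : ContMDiff (𝓡 n) (𝓡 k) (⊤ : ℕ∞) e)
    (hinj : ∀ y : M, Function.Injective (mfderiv (𝓡 n) (𝓡 k) e y)) (y₀ : M) :
    ∃ U : Set M, IsOpen U ∧ y₀ ∈ U ∧ ∃ C : ℝ, 0 ≤ C ∧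
      ∀ y ∈ U, ∀ y' ∈ U, ∀ v : 𝔼 k,
        (∀ w : TangentSpace (𝓡 n) y, ⟪v, (mfderiv (𝓡 n) (𝓡 k) e y w : 𝔼 k)⟫ = 0) →
        |⟪v, e y' - e y⟫| ≤ C * ‖v‖ * ‖e y' - e y‖ ^ 2 := by
  classical
  set φ := chartAt (EuclideanSpace ℝ (Fin n)) y₀ with hφ
  set g : (𝔼 n) → 𝔼 k := e ∘ φ.symm with hgdef
  set z₀ : 𝔼 n := φ y₀ with hz₀
  have hy₀ : y₀ ∈ φ.source := mem_chart_source _ y₀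
  have hz₀t : z₀ ∈ φ.target := φ.map_source hy₀
  have hgC : ContDiffOn ℝ 2 g φ.target := contDiffOn_rep e hsm y₀
  have hgAt : ContDiffAt ℝ 2 g z₀ := hgC.contDiffAt (φ.open_target.mem_nhds hz₀t)
  have hf' : ContDiffAt ℝ 1 (fderiv ℝ g) z₀ := hgAt.fderiv_right (by norm_num)
  obtain ⟨Lip, t, ht, hlip⟩ := hf'.exists_lipschitzOnWith
  -- antilipschitz constant for G₀ := fderiv g z₀
  set G₀ := fderiv ℝ g z₀ with hG₀
  have hG₀inj : Function.Injective G₀ := by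
    have h1 := fderiv_rep e hsm y₀ hz₀t
    have h2 : φ.symm z₀ = y₀ := φ.left_inv hy₀
    rw [h2] at h1
    rw [hG₀, h1]
    show Function.Injective ((mfderiv (𝓡 n) (𝓡 k) e y₀) ∘
      (mfderiv (𝓡 n) (𝓡 n) (⇑φ.symm) z₀))
    exact (hinj y₀).comp ((mdifferentiable_chart (I := 𝓡 n) y₀).symm.mfderiv_injective hz₀t)
  obtain ⟨K, hKpos, hK⟩ := (G₀ : (𝔼 n) →ₗ[ℝ] 𝔼 k).exists_antilipschitzWith
    (LinearMap.ker_eq_bot.mpr hG₀inj)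
  set KR : ℝ := (K : ℝ) + 1 with hKR
  have hKRpos : 0 < KR := by positivity
  have hKR1 : (1:ℝ) ≤ KR := by
    have : (0:ℝ) ≤ (K:ℝ) := K.coe_nonneg
    linarith
  have hanti : ∀ w : 𝔼 n, ‖w‖ ≤ KR * ‖G₀ w‖ := by
    intro w
    have h1 : ‖w‖ ≤ (K : ℝ) * ‖G₀ w‖ := by
      have := hK.le_mul_dist w 0
      simpa [dist_eq_norm, map_zero] using this
    nlinarith [norm_nonneg (G₀ w)]
  -- choose the radius ρ
  clear_value KR
  obtain ⟨ρ₁, hρ₁pos, hball₁⟩ : ∃ ρ₁ > 0, ball z₀ ρ₁ ⊆ t ∩ φ.target :=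
    Metric.mem_nhds_iff.mp (Filter.inter_mem ht (φ.open_target.mem_nhds hz₀t))
  set ρ : ℝ := min (ρ₁ / 2) (1 / (8 * KR * ((Lip : ℝ) + 1))) with hρ
  have hρpos : 0 < ρ := by
    apply lt_min (by linarith)
    positivity
  have hρle : ρ ≤ 1 / (8 * KR * ((Lip : ℝ) + 1)) := min_le_right _ _
  clear_value ρ
  set s : Set (𝔼 n) := ball z₀ ρ with hs
  have hst : s ⊆ t ∩ φ.target := by
    intro w hw
    apply hball₁
    exact ball_subset_ball (by linarith [min_le_left (ρ₁/2) (1 / (8 * KR * ((Lip : ℝ) + 1)))]) hw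
  have hz₀s : z₀ ∈ s := mem_ball_self hρpos
  have hgdiff : ∀ z ∈ φ.target, DifferentiableAt ℝ g z := fun z hz =>
    (hgC.contDiffAt (φ.open_target.mem_nhds hz)).differentiableAt (by norm_num)
  have hlipR : ∀ z ∈ t, ∀ w ∈ t, ‖fderiv ℝ g w - fderiv ℝ g z‖ ≤ (Lip : ℝ) * ‖w - z‖ := by
    intro z hz w hw
    have := hlip.dist_le_mul w hw z hz
    simpa [dist_eq_norm] using this
  -- Taylor estimate on small balls
  have htaylor : ∀ z ∈ s, ∀ z' ∈ s,
      ‖g z' - g z - fderiv ℝ g z (z' - z)‖ ≤ (Lip : ℝ) * ‖z' - z‖ * ‖z' - z‖ := by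
    intro z hz z' hz'
    have hseg : segment ℝ z z' ⊆ s := (convex_ball z₀ ρ).segment_subset hz hz'
    have hder : ∀ w ∈ segment ℝ z z',
        HasFDerivWithinAt g (fderiv ℝ g w) (segment ℝ z z') w := fun w hw =>
      (hgdiff w (hst (hseg hw)).2).hasFDerivAt.hasFDerivWithinAt
    have hbound : ∀ w ∈ segment ℝ z z',
        ‖fderiv ℝ g w - fderiv ℝ g z‖ ≤ (Lip : ℝ) * ‖z' - z‖ := by
      intro w hw
      have h1 := hlipR z (hst hz).1 w (hst (hseg hw)).1
      have h2 : ‖w - z‖ ≤ ‖z' - z‖ := by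
        obtain ⟨a, b, ha, hb, hab, rfl⟩ := hw
        have heq : a • z + b • z' - z = b • (z' - z) := by
          have ha' : a = 1 - b := by linarith
          rw [ha']; module
        rw [heq, norm_smul]
        have hb1 : b ≤ 1 := by linarith
        calc ‖b‖ * ‖z' - z‖ = b * ‖z' - z‖ := by rw [Real.norm_eq_abs, abs_of_nonneg hb]
          _ ≤ 1 * ‖z' - z‖ := by
            apply mul_le_mul_of_nonneg_right hb1 (norm_nonneg _)
          _ = ‖z' - z‖ := one_mul _
      calc ‖fderiv ℝ g w - fderiv ℝ g z‖ ≤ (Lip : ℝ) * ‖w - z‖ := h1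
        _ ≤ (Lip : ℝ) * ‖z' - z‖ := mul_le_mul_of_nonneg_left h2 Lip.coe_nonneg
    have := Convex.norm_image_sub_le_of_norm_hasFDerivWithin_le' hder hbound
      (convex_segment z z') (left_mem_segment ℝ z z') (right_mem_segment ℝ z z')
    linarith [this]
  -- lower bound for the differential on s
  have hLipρ : (Lip : ℝ) * ρ ≤ 1 / (2 * KR) := by
    have h1 : (Lip : ℝ) * ρ ≤ (Lip : ℝ) * (1 / (8 * KR * ((Lip : ℝ) + 1))) :=
      mul_le_mul_of_nonneg_left hρle Lip.coe_nonneg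
    have h2 : (Lip : ℝ) * (1 / (8 * KR * ((Lip : ℝ) + 1))) ≤ 1 / (8 * KR) := by
      rw [mul_one_div, div_le_div_iff₀ (by positivity) (by positivity)]
      nlinarith [Lip.coe_nonneg, hKRpos]
    have h3 : 1 / (8 * KR) ≤ 1 / (2 * KR) := by
      exact div_le_div_of_nonneg_left one_pos.le (by positivity) (by linarith)
    linarith
  -- lower bound for the differential on s
  have hlow : ∀ z ∈ s, ∀ d : 𝔼 n, ‖d‖ ≤ 2 * KR * ‖fderiv ℝ g z d‖ := by
    intro z hz d
    have h1 : ‖fderiv ℝ g z - G₀‖ ≤ (Lip : ℝ) * ρ := by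
      have h2 := hlipR z₀ (hst hz₀s).1 z (hst hz).1
      have h3 : ‖z - z₀‖ ≤ ρ := by
        have := mem_ball_iff_norm.mp hz
        linarith
      calc ‖fderiv ℝ g z - fderiv ℝ g z₀‖ ≤ (Lip : ℝ) * ‖z - z₀‖ := h2
        _ ≤ (Lip : ℝ) * ρ := mul_le_mul_of_nonneg_left h3 Lip.coe_nonneg
    have h4 : ‖G₀ d‖ ≤ ‖fderiv ℝ g z d‖ + (1 / (2 * KR)) * ‖d‖ := by
      have h5 : G₀ d = fderiv ℝ g z d - (fderiv ℝ g z - G₀) d := by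
        simp [ContinuousLinearMap.sub_apply]
      have h6 : ‖(fderiv ℝ g z - G₀) d‖ ≤ ((Lip : ℝ) * ρ) * ‖d‖ :=
        le_trans ((fderiv ℝ g z - G₀).le_opNorm d)
          (mul_le_mul_of_nonneg_right h1 (norm_nonneg _))
      have h7 : ((Lip : ℝ) * ρ) * ‖d‖ ≤ (1 / (2 * KR)) * ‖d‖ :=
        mul_le_mul_of_nonneg_right hLipρ (norm_nonneg _)
      calc ‖G₀ d‖ ≤ ‖fderiv ℝ g z d‖ + ‖(fderiv ℝ g z - G₀) d‖ := by
            rw [h5]; exact norm_sub_le _ _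
        _ ≤ ‖fderiv ℝ g z d‖ + (1 / (2 * KR)) * ‖d‖ := by linarith
    have h8 := hanti d
    have h9 : (0:ℝ) < 2 * KR := by linarith
    have h10 : KR * ((1 / (2 * KR)) * ‖d‖) = ‖d‖ / 2 := by
      field_simp
    have h13 : ‖d‖ ≤ KR * ‖fderiv ℝ g z d‖ + ‖d‖ / 2 := by
      calc ‖d‖ ≤ KR * ‖G₀ d‖ := h8
        _ ≤ KR * (‖fderiv ℝ g z d‖ + (1 / (2 * KR)) * ‖d‖) :=
            mul_le_mul_of_nonneg_left h4 (le_of_lt hKRpos)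
        _ = KR * ‖fderiv ℝ g z d‖ + KR * ((1 / (2 * KR)) * ‖d‖) := mul_add _ _ _
        _ = KR * ‖fderiv ℝ g z d‖ + ‖d‖ / 2 := by rw [h10]
    linarith
  -- comparability: chart distance vs ambient distance
  have hlower : ∀ z ∈ s, ∀ z' ∈ s, ‖z' - z‖ ≤ 4 * KR * ‖g z' - g z‖ := by
    intro z hz z' hz'
    have htay := htaylor z hz z' hz'
    have h2 := hlow z hz (z' - z)
    have h3 : ‖fderiv ℝ g z (z' - z)‖ ≤ ‖g z' - g z‖ + (Lip : ℝ) * ‖z' - z‖ * ‖z' - z‖ := by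
      have h5 : fderiv ℝ g z (z' - z) = (g z' - g z) - (g z' - g z - fderiv ℝ g z (z' - z)) := by
        abel
      calc ‖fderiv ℝ g z (z' - z)‖
          ≤ ‖g z' - g z‖ + ‖g z' - g z - fderiv ℝ g z (z' - z)‖ := by
            conv_lhs => rw [h5]
            exact norm_sub_le _ _
        _ ≤ ‖g z' - g z‖ + (Lip : ℝ) * ‖z' - z‖ * ‖z' - z‖ := by linarith
    have h4 : (Lip : ℝ) * ‖z' - z‖ ≤ 1 / (4 * KR) := by
      have hd : ‖z' - z‖ ≤ 2 * ρ := by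
        have hz1 := mem_ball_iff_norm.mp hz
        have hz2 := mem_ball_iff_norm.mp hz'
        calc ‖z' - z‖ = ‖(z' - z₀) - (z - z₀)‖ := by abel_nf
          _ ≤ ‖z' - z₀‖ + ‖z - z₀‖ := norm_sub_le _ _
          _ ≤ 2 * ρ := by linarith
      have h6 : (Lip : ℝ) * ‖z' - z‖ ≤ (Lip : ℝ) * (2 * ρ) :=
        mul_le_mul_of_nonneg_left hd Lip.coe_nonneg
      have h7 : (Lip : ℝ) * (2 * ρ) ≤ 2 * ((Lip : ℝ) * (1 / (8 * KR * ((Lip : ℝ) + 1)))) := by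
        nlinarith [Lip.coe_nonneg, mul_le_mul_of_nonneg_left hρle Lip.coe_nonneg]
      have h8 : (Lip : ℝ) * (1 / (8 * KR * ((Lip : ℝ) + 1))) ≤ 1 / (8 * KR) := by
        rw [mul_one_div, div_le_div_iff₀ (by positivity) (by positivity)]
        nlinarith [Lip.coe_nonneg, hKRpos]
      have h9 : 2 * (1 / (8*KR)) ≤ 1 / (4 * KR) := by
        have : 2 * (1 / (8*KR)) = 1 / (4 * KR) := by field_simp; ring
        linarith
      linarith
    -- ‖d‖ ≤ 2KR * (‖gz'-gz‖ + Lip‖d‖²) ≤ 2KR‖gz'-gz‖ + ‖d‖/2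
    have h10 : 2 * KR * ((Lip : ℝ) * ‖z' - z‖ * ‖z' - z‖) ≤ ‖z' - z‖ / 2 := by
      have h10a : (Lip : ℝ) * ‖z' - z‖ * ‖z' - z‖ ≤ (1 / (4 * KR)) * ‖z' - z‖ :=
        mul_le_mul_of_nonneg_right h4 (norm_nonneg (z' - z))
      have h10b : 2 * KR * ((Lip : ℝ) * ‖z' - z‖ * ‖z' - z‖) ≤
          2 * KR * ((1 / (4 * KR)) * ‖z' - z‖) :=
        mul_le_mul_of_nonneg_left h10a (by linarith)
      have h10c : 2 * KR * ((1 / (4 * KR)) * ‖z' - z‖) = ‖z' - z‖ / 2 := by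
        field_simp; ring
      linarith
    have h11 : 2 * KR * ‖fderiv ℝ g z (z' - z)‖ ≤
        2 * KR * (‖g z' - g z‖ + (Lip : ℝ) * ‖z' - z‖ * ‖z' - z‖) :=
      mul_le_mul_of_nonneg_left h3 (by linarith)
    have h12 := mul_add (2 * KR) ‖g z' - g z‖ ((Lip : ℝ) * ‖z' - z‖ * ‖z' - z‖)
    have h14 : (2 * KR) * ‖g z' - g z‖ * 2 = 4 * KR * ‖g z' - g z‖ := by ring
    linarith [h2, h11, h10, h12]
  -- assemble the local statement
  refine ⟨φ.source ∩ φ ⁻¹' s,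
    φ.continuousOn.isOpen_inter_preimage φ.open_source isOpen_ball,
    ⟨hy₀, hz₀s⟩, (Lip : ℝ) * (4 * KR) ^ 2, by positivity, ?_⟩
  intro y hy y' hy' v hv
  have hzs : (φ y : 𝔼 n) ∈ s := hy.2
  have hz's : (φ y' : 𝔼 n) ∈ s := hy'.2
  have hzt : (φ y : 𝔼 n) ∈ φ.target := φ.map_source hy.1
  have hgz : g (φ y) = e y := by
    show e (φ.symm (φ y)) = e y
    rw [φ.left_inv hy.1]
  have hgz' : g (φ y') = e y' := by
    show e (φ.symm (φ y')) = e y'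
    rw [φ.left_inv hy'.1]
  have horth : ⟪v, fderiv ℝ g (φ y) ((φ y' : 𝔼 n) - φ y)⟫ = 0 := by
    have h1 := fderiv_rep e hsm y₀ hzt
    have h2 : φ.symm (φ y) = y := φ.left_inv hy.1
    rw [h2] at h1
    rw [h1]
    exact hv _
  have htay := htaylor (φ y) hzs (φ y') hz's
  have hlow' := hlower (φ y) hzs (φ y') hz's
  have h5 : ⟪v, g (φ y') - g (φ y) - fderiv ℝ g (φ y) ((φ y' : 𝔼 n) - φ y)⟫ =
      ⟪v, e y' - e y⟫ := by
    rw [inner_sub_right, horth, sub_zero, hgz, hgz']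
  rw [← h5]
  have h6 := abs_real_inner_le_norm v
    (g (φ y') - g (φ y) - fderiv ℝ g (φ y) ((φ y' : 𝔼 n) - φ y))
  have h7 : ‖g (φ y') - g (φ y)‖ = ‖e y' - e y‖ := by rw [hgz, hgz']
  rw [h7] at hlow'
  have h8 : ‖(φ y' : 𝔼 n) - φ y‖ * ‖(φ y' : 𝔼 n) - φ y‖ ≤
      (4 * KR * ‖e y' - e y‖) * (4 * KR * ‖e y' - e y‖) :=
    mul_self_le_mul_self (norm_nonneg _) hlow'
  have h9 : ‖g (φ y') - g (φ y) - fderiv ℝ g (φ y) ((φ y' : 𝔼 n) - φ y)‖ ≤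
      (Lip : ℝ) * ((4 * KR) ^ 2 * ‖e y' - e y‖ ^ 2) := by
    calc ‖g (φ y') - g (φ y) - fderiv ℝ g (φ y) ((φ y' : 𝔼 n) - φ y)‖
        ≤ (Lip : ℝ) * ‖(φ y' : 𝔼 n) - φ y‖ * ‖(φ y' : 𝔼 n) - φ y‖ := htay
      _ ≤ (Lip : ℝ) * ((4 * KR) ^ 2 * ‖e y' - e y‖ ^ 2) := by
          rw [mul_assoc]
          apply mul_le_mul_of_nonneg_left _ Lip.coe_nonneg
          calc ‖(φ y' : 𝔼 n) - φ y‖ * ‖(φ y' : 𝔼 n) - φ y‖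
              ≤ (4 * KR * ‖e y' - e y‖) * (4 * KR * ‖e y' - e y‖) := h8
            _ = (4 * KR) ^ 2 * ‖e y' - e y‖ ^ 2 := by ring
  calc |⟪v, g (φ y') - g (φ y) - fderiv ℝ g (φ y) ((φ y' : 𝔼 n) - φ y)⟫|
      ≤ ‖v‖ * ‖g (φ y') - g (φ y) - fderiv ℝ g (φ y) ((φ y' : 𝔼 n) - φ y)‖ := h6
    _ ≤ ‖v‖ * ((Lip : ℝ) * ((4 * KR) ^ 2 * ‖e y' - e y‖ ^ 2)) :=
        mul_le_mul_of_nonneg_left h9 (norm_nonneg v)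
    _ = (Lip : ℝ) * (4 * KR) ^ 2 * ‖v‖ * ‖e y' - e y‖ ^ 2 := by ring

/-- range of fderiv of the chart representation equals range of mfderiv -/
theorem range_fderiv_rep (e : M → 𝔼 k) (he : ContMDiff (𝓡 n) (𝓡 k) (⊤ : ℕ∞) e)
    (y₀ : M) {y : M} (hy : y ∈ (chartAt (EuclideanSpace ℝ (Fin n)) y₀).source) :
    (Set.range fun w : 𝔼 n =>
        (fderiv ℝ (e ∘ (chartAt (EuclideanSpace ℝ (Fin n)) y₀).symm)
          (chartAt (EuclideanSpace ℝ (Fin n)) y₀ y) w : 𝔼 k)) =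
      Set.range fun w : 𝔼 n => (mfderiv (𝓡 n) (𝓡 k) e y w : 𝔼 k) := by
  set φ := chartAt (EuclideanSpace ℝ (Fin n)) y₀ with hφ
  have hz : φ y ∈ φ.target := φ.map_source hy
  have h1 := fderiv_rep e he y₀ hz
  have h2 : φ.symm (φ y) = y := φ.left_inv hy
  rw [h2] at h1
  rw [h1]
  ext x
  constructor
  · rintro ⟨w, rfl⟩
    exact ⟨mfderiv (𝓡 n) (𝓡 n) φ.symm (φ y) w, rfl⟩
  · rintro ⟨w, rfl⟩
    obtain ⟨w', hw'⟩ := (mdifferentiable_chart (I := 𝓡 n) y₀).symm.mfderiv_surjective hz w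
    refine ⟨w', ?_⟩
    show (mfderiv (𝓡 n) (𝓡 k) e y)
        ((mfderiv (𝓡 n) (𝓡 n) (⇑φ.symm) ((φ : M → 𝔼 n) y)) w') = _
    rw [hw']


/-- At a global minimizer of the distance to `x`, the vector `x - e y₀` is orthogonal
to the range of the differential. -/
theorem orth_at_min (e : M → 𝔼 k) (he : ContMDiff (𝓡 n) (𝓡 k) (⊤ : ℕ∞) e)
    (x : 𝔼 k) (y₀ : M) (hmin : ∀ y : M, ‖x - e y₀‖ ≤ ‖x - e y‖) :
    ∀ w : TangentSpace (𝓡 n) y₀, ⟪x - e y₀, (mfderiv (𝓡 n) (𝓡 k) e y₀ w : 𝔼 k)⟫ = 0 := by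
  set φ := chartAt (EuclideanSpace ℝ (Fin n)) y₀ with hφ
  set g : (𝔼 n) → 𝔼 k := e ∘ φ.symm with hg
  set z₀ : 𝔼 n := φ y₀ with hz₀
  have hy₀ : y₀ ∈ φ.source := mem_chart_source _ y₀
  have hz₀t : z₀ ∈ φ.target := φ.map_source hy₀
  have hsy : φ.symm z₀ = y₀ := φ.left_inv hy₀
  -- differentiability of g at z₀
  have hgd : DifferentiableAt ℝ g z₀ := by
    have := (contDiffOn_rep e he y₀).contDiffAt (φ.open_target.mem_nhds hz₀t)
    exact this.differentiableAt (by norm_num)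
  -- local min of the squared distance
  have hloc : IsLocalMin (fun z => ⟪x - g z, x - g z⟫) z₀ := by
    filter_upwards [φ.open_target.mem_nhds hz₀t] with z hz
    have h1 : g z₀ = e y₀ := by rw [hg]; simp [hsy]
    have h2 : ‖x - g z₀‖ ≤ ‖x - g z‖ := by rw [h1]; exact hmin (φ.symm z)
    rw [real_inner_self_eq_norm_sq, real_inner_self_eq_norm_sq]
    exact pow_le_pow_left₀ (norm_nonneg _) h2 2
  have hD : fderiv ℝ (fun z => ⟪x - g z, x - g z⟫) z₀ = 0 := hloc.fderiv_eq_zero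
  -- compute the derivative
  have hFd : DifferentiableAt ℝ (fun z => x - g z) z₀ := (differentiableAt_const x).sub hgd
  have hkey : ∀ w' : 𝔼 n, ⟪x - e y₀, fderiv ℝ g z₀ w'⟫ = 0 := by
    intro w'
    have := fderiv_inner_apply ℝ hFd hFd w'
    rw [hD] at this
    have hf' : fderiv ℝ (fun z => x - g z) z₀ = -fderiv ℝ g z₀ := by
      have h0 : HasFDerivAt (fun z => x - g z) (-fderiv ℝ g z₀) z₀ := by
        have h0' := (hasFDerivAt_const x z₀).sub hgd.hasFDerivAt
        rw [zero_sub] at h0'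
        exact h0'
      exact h0.fderiv
    rw [hf'] at this
    have h1 : g z₀ = e y₀ := by rw [hg]; simp [hsy]
    rw [h1] at this
    simp only [ContinuousLinearMap.zero_apply, ContinuousLinearMap.neg_apply] at this
    rw [inner_neg_right, inner_neg_left] at this
    have hcomm := real_inner_comm ((fderiv ℝ g z₀) w') (x - e y₀)
    linarith [hcomm]
  -- transfer to mfderiv via the range identity
  intro w
  have hrange := range_fderiv_rep e he y₀ hy₀
  have hmem : (mfderiv (𝓡 n) (𝓡 k) e y₀ w : 𝔼 k) ∈
      Set.range fun w : 𝔼 n => (mfderiv (𝓡 n) (𝓡 k) e y₀ w : 𝔼 k) := ⟨w, rfl⟩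
  rw [← hrange] at hmem
  obtain ⟨w', hw'⟩ := hmem
  rw [← hw']
  exact hkey w'

/-- Global uniform quadratic estimate on a compact manifold. -/
theorem global_quad [CompactSpace M] (e : M → 𝔼 k) (hsm : ContMDiff (𝓡 n) (𝓡 k) (⊤ : ℕ∞) e)
    (hinj : ∀ y : M, Function.Injective (mfderiv (𝓡 n) (𝓡 k) e y))
    (heinj : Function.Injective e) :
    ∃ C : ℝ, 0 ≤ C ∧ ∃ δ : ℝ, 0 < δ ∧ ∀ y y' : M, ‖e y' - e y‖ ≤ δ →
      ∀ v : 𝔼 k, (∀ w : TangentSpace (𝓡 n) y, ⟪v, (mfderiv (𝓡 n) (𝓡 k) e y w : 𝔼 k)⟫ = 0) →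
        |⟪v, e y' - e y⟫| ≤ C * ‖v‖ * ‖e y' - e y‖ ^ 2 := by
  classical
  choose U hUopen hUmem C hC0 hest using local_quad e hsm hinj
  obtain ⟨t, ht⟩ := IsCompact.elim_finite_subcover (isCompact_univ (X := M)) U hUopen
    (fun y _ => mem_iUnion.mpr ⟨y, hUmem y⟩)
  have hcov : ∀ y : M, ∃ i ∈ t, y ∈ U i := by
    intro y
    have := ht (mem_univ y)
    simpa using this
  set Cs : ℝ := ∑ i ∈ t, C i with hCs
  have hCs0 : 0 ≤ Cs := Finset.sum_nonneg fun i _ => hC0 i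
  have hCle : ∀ i ∈ t, C i ≤ Cs := fun i hi =>
    Finset.single_le_sum (fun j _ => hC0 j) hi
  have hmain : ∀ i ∈ t, ∀ y ∈ U i, ∀ y' ∈ U i, ∀ v : 𝔼 k,
      (∀ w : TangentSpace (𝓡 n) y, ⟪v, (mfderiv (𝓡 n) (𝓡 k) e y w : 𝔼 k)⟫ = 0) →
      |⟪v, e y' - e y⟫| ≤ Cs * ‖v‖ * ‖e y' - e y‖ ^ 2 := by
    intro i hi y hy y' hy' v hv
    have h1 := hest i y hy y' hy' v hv
    have h2 : C i * ‖v‖ * ‖e y' - e y‖ ^ 2 ≤ Cs * ‖v‖ * ‖e y' - e y‖ ^ 2 := by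
      apply mul_le_mul_of_nonneg_right _ (sq_nonneg _)
      exact mul_le_mul_of_nonneg_right (hCle i hi) (norm_nonneg v)
    linarith
  set Kset : Set (M × M) := {p | ∀ i ∈ t, ¬(p.1 ∈ U i ∧ p.2 ∈ U i)} with hKset
  have hKclosed : IsClosed Kset := by
    have : Kset = (⋃ i ∈ t, (U i) ×ˢ (U i))ᶜ := by
      ext p
      simp [hKset, mem_iUnion, Set.mem_prod, not_exists, not_and]
    rw [this]
    exact (isOpen_biUnion fun i _ => (hUopen i).prod (hUopen i)).isClosed_compl
  have hF : Continuous fun p : M × M => ‖e p.2 - e p.1‖ := by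
    have hc := hsm.continuous
    exact ((hc.comp continuous_snd).sub (hc.comp continuous_fst)).norm
  rcases Kset.eq_empty_or_nonempty with hKe | hKne
  · refine ⟨Cs, hCs0, 1, one_pos, ?_⟩
    intro y y' _ v hv
    have hyK : (y, y') ∉ Kset := by rw [hKe]; exact notMem_empty _
    simp only [hKset, mem_setOf_eq, not_forall] at hyK
    obtain ⟨i, hi, hmem⟩ := hyK
    rw [not_not] at hmem
    exact hmain i hi y hmem.1 y' hmem.2 v hv
  · obtain ⟨p₀, hp₀K, hp₀min⟩ :=
      (hKclosed.isCompact).exists_isMinOn hKne (hF.continuousOn)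
    have hδ₀pos : 0 < ‖e p₀.2 - e p₀.1‖ := by
      rcases eq_or_lt_of_le (norm_nonneg (e p₀.2 - e p₀.1)) with h | h
      · exfalso
        have h1 : e p₀.1 = e p₀.2 := by
          have := h.symm
          rw [norm_eq_zero, sub_eq_zero] at this
          exact this.symm
        have h2 : p₀.1 = p₀.2 := heinj h1
        obtain ⟨i, hi, hmem⟩ := hcov p₀.1
        exact hp₀K i hi ⟨hmem, h2 ▸ hmem⟩
      · exact h
    refine ⟨Cs, hCs0, ‖e p₀.2 - e p₀.1‖ / 2, by linarith, ?_⟩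
    intro y y' hd v hv
    have hyK : (y, y') ∉ Kset := by
      intro hK
      have h2 : ‖e p₀.2 - e p₀.1‖ ≤ ‖e y' - e y‖ := isMinOn_iff.mp hp₀min (y, y') hK
      linarith
    simp only [hKset, mem_setOf_eq, not_forall] at hyK
    obtain ⟨i, hi, hmem⟩ := hyK
    rw [not_not] at hmem
    exact hmain i hi y hmem.1 y' hmem.2 v hv

/-- Key uniqueness estimate: a point displaced from `e y` by a small normal vector is
strictly closer to `e y` than to any other point of the image. -/
theorem strict_nearest [CompactSpace M] (e : M → 𝔼 k) (hsm : ContMDiff (𝓡 n) (𝓡 k) (⊤ : ℕ∞) e)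
    (hinj : ∀ y : M, Function.Injective (mfderiv (𝓡 n) (𝓡 k) e y))
    (heinj : Function.Injective e) :
    ∃ L : ℝ, 0 < L ∧ ∀ (y : M) (v : 𝔼 k),
      (∀ w : TangentSpace (𝓡 n) y, ⟪v, (mfderiv (𝓡 n) (𝓡 k) e y w : 𝔼 k)⟫ = 0) →
      ‖v‖ < L → ∀ y' : M, e y' ≠ e y → ‖v‖ < ‖e y + v - e y'‖ := by
  obtain ⟨C, hC0, δ, hδpos, hquad⟩ := global_quad e hsm hinj heinj
  refine ⟨min (δ / 2) (1 / (4 * (C + 1))), lt_min (by linarith) (one_div_pos.mpr (by linarith)), ?_⟩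
  intro y v hv hvL y' hne
  set d : 𝔼 k := e y' - e y with hd
  have hdne : d ≠ 0 := sub_ne_zero.mpr hne
  have hvd : e y + v - e y' = v - d := by rw [hd]; abel
  rw [hvd]
  have hsq : ‖v - d‖ ^ 2 = ‖v‖ ^ 2 - 2 * ⟪v, d⟫ + ‖d‖ ^ 2 := by
    rw [norm_sub_sq_real]
  have hvL2 : ‖v‖ < δ / 2 := lt_of_lt_of_le hvL (min_le_left _ _)
  have hvL3 : ‖v‖ < 1 / (4 * (C + 1)) := lt_of_lt_of_le hvL (min_le_right _ _)
  rcases le_or_gt ‖d‖ δ with hcase | hcase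
  · -- nearby case: use the quadratic estimate
    have h1 : |⟪v, d⟫| ≤ C * ‖v‖ * ‖d‖ ^ 2 := hquad y y' hcase v hv
    have h2 : C * ‖v‖ * ‖d‖ ^ 2 ≤ ‖d‖ ^ 2 / 4 := by
      have h3 : C * ‖v‖ ≤ 1 / 4 := by
        have h4 : C * ‖v‖ ≤ C * (1 / (4 * (C + 1))) :=
          mul_le_mul_of_nonneg_left (le_of_lt hvL3) hC0
        have h5 : C * (1 / (4 * (C + 1))) ≤ 1 / 4 := by
          rw [mul_one_div, div_le_div_iff₀ (by positivity) (by norm_num)]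
          nlinarith
        linarith
      nlinarith [sq_nonneg ‖d‖]
    have h6 : ‖v‖ ^ 2 < ‖v - d‖ ^ 2 := by
      have h7 : (0:ℝ) < ‖d‖ ^ 2 := pow_pos (norm_pos_iff.mpr hdne) 2
      have h8 : ⟪v, d⟫ ≤ ‖d‖ ^ 2 / 4 := le_trans (le_abs_self _) (le_trans h1 h2)
      rw [hsq]; nlinarith
    exact lt_of_pow_lt_pow_left₀ 2 (norm_nonneg _) h6
  · -- far case: triangle inequality
    have h9 : ‖d‖ - ‖v‖ ≤ ‖v - d‖ := by
      rw [norm_sub_rev v d]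
      exact norm_sub_norm_le d v
    linarith

theorem main_nonempty [CompactSpace M] [Nonempty M] (e : M → 𝔼 k)
    (hsm : ContMDiff (𝓡 n) (𝓡 k) (⊤ : ℕ∞) e)
    (hinj : ∀ y : M, Function.Injective (mfderiv (𝓡 n) (𝓡 k) e y))
    (heinj : Function.Injective e) :
    ∃ L : ℝ, 0 < L ∧ ∀ ε : ℝ, 0 < ε → ε < L →
      ∃ (ν : Set (𝔼 k)) (r : (𝔼 k) → 𝔼 k),
        (IsOpen ν ∧ Set.range e ⊆ ν ∧ ContinuousOn r ν ∧ (∀ x ∈ ν, r x ∈ Set.range e) ∧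
        (∀ y : M, r (e y) = e y) ∧
        (∀ x ∈ ν, ∀ y : M, ‖x - r x‖ ≤ ‖x - e y‖ ∧ (‖x - r x‖ = ‖x - e y‖ ↔ r x = e y)) ∧
        (∀ y : M, ∀ x : 𝔼 k, (x ∈ ν ∧ r x = e y) ↔
          ∃ v : 𝔼 k,
            (∀ w : TangentSpace (𝓡 n) y, ⟪v, (mfderiv (𝓡 n) (𝓡 k) e y w : 𝔼 k)⟫ = 0) ∧
            ‖v‖ < ε ∧ x = e y + v)) := by
  classical
  obtain ⟨L, hLpos, hU⟩ := strict_nearest e hsm hinj heinj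
  have hcont : Continuous e := hsm.continuous
  have hcomp : IsCompact (Set.range e) := isCompact_range hcont
  have hne : (Set.range e).Nonempty := range_nonempty e
  -- the nearest-point projection
  have hnear : ∀ x : 𝔼 k, ∃ y : M, infDist x (Set.range e) = dist x (e y) := by
    intro x
    obtain ⟨z, hz, h⟩ := hcomp.exists_infDist_eq_dist hne x
    obtain ⟨y, rfl⟩ := hz
    exact ⟨y, h⟩
  choose P hP using hnear
  have hPmin : ∀ (x : 𝔼 k) (y : M), dist x (e (P x)) ≤ dist x (e y) := by
    intro x y
    rw [← hP]
    exact infDist_le_dist_of_mem ⟨y, rfl⟩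
  have hPnorm : ∀ (x : 𝔼 k) (y : M), ‖x - e (P x)‖ ≤ ‖x - e y‖ := by
    intro x y
    rw [← dist_eq_norm, ← dist_eq_norm]
    exact hPmin x y
  have hnormalP : ∀ x : 𝔼 k, ∀ w : TangentSpace (𝓡 n) (P x),
      ⟪x - e (P x), (mfderiv (𝓡 n) (𝓡 k) e (P x) w : 𝔼 k)⟫ = 0 := fun x =>
    orth_at_min e hsm x (P x) (hPnorm x)
  -- key consequence of the strict inequality
  have key : ∀ (y : M) (v : 𝔼 k),
      (∀ w : TangentSpace (𝓡 n) y, ⟪v, (mfderiv (𝓡 n) (𝓡 k) e y w : 𝔼 k)⟫ = 0) →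
      ‖v‖ < L → e (P (e y + v)) = e y ∧ infDist (e y + v) (Set.range e) = ‖v‖ := by
    intro y v hv hvL
    have hd : dist (e y + v) (e y) = ‖v‖ := by
      rw [dist_eq_norm]; congr 1; abel
    by_cases hc : e (P (e y + v)) = e y
    · refine ⟨hc, ?_⟩
      rw [hP, hc, hd]
    · exfalso
      have h1 := hU y v hv hvL (P (e y + v)) hc
      have h2 : dist (e y + v) (e (P (e y + v))) = ‖e y + v - e (P (e y + v))‖ :=
        dist_eq_norm _ _
      have h3 := hPmin (e y + v) y
      rw [h2, hd] at h3
      linarith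
  refine ⟨L, hLpos, ?_⟩
  intro ε hεpos hεL
  refine ⟨{x | infDist x (Set.range e) < ε}, fun x => e (P x), ?_, ?_, ?_, ?_, ?_, ?_, ?_⟩
  · exact isOpen_lt (continuous_infDist_pt _) continuous_const
  · rintro x ⟨y, rfl⟩
    have : infDist (e y) (Set.range e) = 0 := infDist_zero_of_mem ⟨y, rfl⟩
    simpa [this] using hεpos
  · -- continuity of the retraction
    intro x₀ hx₀
    apply ContinuousAt.continuousWithinAt
    rw [ContinuousAt, _root_.tendsto_nhds]
    intro V hVopen hVmem
    set K' : Set (𝔼 k) := Set.range e \ V with hK'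
    have hK'comp : IsCompact K' := hcomp.diff hVopen
    rcases K'.eq_empty_or_nonempty with hK'e | hK'ne
    · -- the whole image is inside V
      have hsub : Set.range e ⊆ V := by
        rw [diff_eq_empty] at hK'e
        exact hK'e
      exact Filter.Eventually.of_forall fun x => hsub ⟨P x, rfl⟩
    · obtain ⟨z₀, hz₀K', hz₀d⟩ := hK'comp.exists_infDist_eq_dist hK'ne x₀
      obtain ⟨⟨y', rfl⟩, hz₀V⟩ := hz₀K'
      -- strict inequality at x₀
      have hx₀ν : infDist x₀ (Set.range e) < ε := hx₀
      have hvnorm : ‖x₀ - e (P x₀)‖ < L := by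
        have : infDist x₀ (Set.range e) = ‖x₀ - e (P x₀)‖ := by
          rw [hP, dist_eq_norm]
        linarith [hx₀ν, hεL, this ▸ hx₀ν]
      have hne' : e y' ≠ e (P x₀) := by
        intro hcontra
        apply hz₀V
        rw [hcontra]
        exact hVmem
      have hstrict : infDist x₀ (Set.range e) < infDist x₀ K' := by
        have h1 := hU (P x₀) (x₀ - e (P x₀)) (hnormalP x₀) hvnorm y' hne'
        have h2 : e (P x₀) + (x₀ - e (P x₀)) = x₀ := by abel
        rw [h2] at h1
        have h3 : infDist x₀ (Set.range e) = ‖x₀ - e (P x₀)‖ := by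
          rw [hP, dist_eq_norm]
        rw [h3, hz₀d, dist_eq_norm]
        exact h1
      -- the strict inequality holds in a neighborhood
      have hg : Continuous fun x : 𝔼 k => infDist x K' - infDist x (Set.range e) :=
        (continuous_infDist_pt _).sub (continuous_infDist_pt _)
      have hopen : IsOpen {x : 𝔼 k | 0 < infDist x K' - infDist x (Set.range e)} :=
        isOpen_lt continuous_const hg
      have hmem : x₀ ∈ {x : 𝔼 k | 0 < infDist x K' - infDist x (Set.range e)} := by
        show 0 < infDist x₀ K' - infDist x₀ (Set.range e)
        linarith
      filter_upwards [hopen.mem_nhds hmem] with x hx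
      have hx' : 0 < infDist x K' - infDist x (Set.range e) := hx
      by_contra hrV
      have hrK' : e (P x) ∈ K' := ⟨⟨P x, rfl⟩, hrV⟩
      have h4 : infDist x K' ≤ dist x (e (P x)) := infDist_le_dist_of_mem hrK'
      rw [← hP] at h4
      linarith
  · intro x _
    exact ⟨P x, rfl⟩
  · -- retraction property
    intro y
    have h1 : infDist (e y) (Set.range e) = 0 := infDist_zero_of_mem ⟨y, rfl⟩
    have h2 : dist (e y) (e (P (e y))) = 0 := by rw [← hP]; exact h1
    rw [dist_eq_zero] at h2
    exact h2.symm
  · -- nearest point property with uniqueness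
    intro x hx y
    have hxν : infDist x (Set.range e) < ε := hx
    have hveq : infDist x (Set.range e) = ‖x - e (P x)‖ := by rw [hP, dist_eq_norm]
    have hvL : ‖x - e (P x)‖ < L := by linarith
    constructor
    · exact hPnorm x y
    · constructor
      · intro heq
        by_contra hne'
        have hne'' : e y ≠ e (P x) := fun hcontra => hne' hcontra.symm
        have h1 := hU (P x) (x - e (P x)) (hnormalP x) hvL y hne''
        have h2 : e (P x) + (x - e (P x)) = x := by abel
        rw [h2] at h1
        rw [heq] at h1
        exact lt_irrefl _ h1
      · intro heq
        rw [heq]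
  · -- fiber characterization
    intro y x
    constructor
    · rintro ⟨hxν, hrx⟩
      have hxν' : infDist x (Set.range e) < ε := hxν
      have hveq : infDist x (Set.range e) = ‖x - e (P x)‖ := by rw [hP, dist_eq_norm]
      have hPy : P x = y := heinj hrx
      refine ⟨x - e y, ?_, ?_, ?_⟩
      · have := hnormalP x
        rw [hPy] at this
        exact this
      · rw [← hPy]; linarith
      · abel
    · rintro ⟨v, hvnorm, hvε, rfl⟩
      have hvL : ‖v‖ < L := lt_trans hvε hεL
      obtain ⟨h1, h2⟩ := key y v hvnorm hvL
      exact ⟨by simpa [h2] using hvε, h1⟩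

end TubularAux

set_option maxHeartbeats 1000000 in
/-- Tubular neighborhood theorem: for a compact smooth embedded manifold there is `L > 0`
such that every `0 < ε < L` admits an `ε`-tubular neighborhood. -/
theorem stmt0 {n k : ℕ} {M : Type*} [TopologicalSpace M]
    [ChartedSpace (EuclideanSpace ℝ (Fin n)) M] [IsManifold (𝓡 n) (⊤ : ℕ∞) M]
    [CompactSpace M]
    (e : M → EuclideanSpace ℝ (Fin k)) (he : IsSmoothEmbedding (n := n) e) :
    ∃ L : ℝ, 0 < L ∧ ∀ ε : ℝ, 0 < ε → ε < L →
      ∃ (ν : Set (EuclideanSpace ℝ (Fin k)))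
        (r : EuclideanSpace ℝ (Fin k) → EuclideanSpace ℝ (Fin k)),
        IsTubularNbhd (n := n) e ε ν r := by
  obtain ⟨hsm, hemb, hinj⟩ := he
  rcases isEmpty_or_nonempty M with hM | hM
  · refine ⟨1, one_pos, fun ε hε _ => ⟨∅, id, isOpen_empty, ?_, continuousOn_empty _,
      fun x hx => hx.elim, fun y => (IsEmpty.false y).elim,
      fun x hx => hx.elim, fun y => (IsEmpty.false y).elim⟩⟩
    rw [Set.range_eq_empty e]
  · obtain ⟨L, hLpos, hmain⟩ := main_nonempty e hsm hinj hemb.injective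
    refine ⟨L, hLpos, fun ε hε hεL => ?_⟩
    obtain ⟨ν, r, h1, h2, h3, h4, h5, h6, h7⟩ := hmain ε hε hεL
    exact ⟨ν, r, h1, h2, h3, h4, h5, h6, h7⟩
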